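/- Let λ_b > 0, t > 0, R_L > 0, antenna gains 0 < g_s ≤ g_m, and beamwidth θ ∈ (0, 2π], and set p_a := θ/(2π) + (1 − θ/(2π))·(g_s/g_m). For s ∈ [0, R_L] define S_r(s) := ∫₀^s 2πλ_b·r·exp(−πλ_b·r²·[1 + p_a·t·ln((t + s²/r²)/(1 + t)) + (g_s/g_m)·t·ln((t + R_L²/r²)/(t + s²/r²))]) dr + ∫_s^{R_L} 2πλ_b·r·exp(−πλ_b·r²·[1 + (g_s/g_m)·t·ln((t + R_L²/r²)/(1 + t))]) dr. Then S_r is monotone nonincreasing on [0, R_L]. -/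
import Mathlib
open Real MeasureTheory

noncomputable def insideF (lamb t RL pa q s r : ℝ) : ℝ :=
  2 * π * lamb * r *
    Real.exp (-(π * lamb * r ^ 2 *
      (1 + pa * t * Real.log ((t + s ^ 2 / r ^ 2) / (1 + t)) +
        q * t * Real.log ((t + RL ^ 2 / r ^ 2) / (t + s ^ 2 / r ^ 2)))))

noncomputable def outsideF (lamb t RL q r : ℝ) : ℝ :=
  2 * π * lamb * r *
    Real.exp (-(π * lamb * r ^ 2 *
      (1 + q * t * Real.log ((t + RL ^ 2 / r ^ 2) / (1 + t)))))

lemma meas_ratio (t a : ℝ) : Measurable (fun r : ℝ => t + a ^ 2 / r ^ 2) :=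
  measurable_const.add (measurable_const.div (measurable_id.pow_const 2))

lemma measurable_insideF (lamb t RL pa q s : ℝ) : Measurable (insideF lamb t RL pa q s) := by
  unfold insideF
  refine (measurable_const.mul measurable_id).mul (Real.measurable_exp.comp (Measurable.neg ?_))
  refine (measurable_const.mul (measurable_id.pow_const 2)).mul ?_
  refine (measurable_const.add (measurable_const.mul (Real.measurable_log.comp
    ((meas_ratio t s).div measurable_const)))).add
    (measurable_const.mul (Real.measurable_log.comp ((meas_ratio t RL).div (meas_ratio t s))))

lemma measurable_outsideF (lamb t RL q : ℝ) : Measurable (outsideF lamb t RL q) := by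
  unfold outsideF
  refine (measurable_const.mul measurable_id).mul (Real.measurable_exp.comp (Measurable.neg ?_))
  exact (measurable_const.mul (measurable_id.pow_const 2)).mul
    (measurable_const.add (measurable_const.mul (Real.measurable_log.comp
      ((meas_ratio t RL).div measurable_const))))

lemma bracket_mono {t RL pa q r s s' : ℝ} (ht : 0 < t) (hqpa : q ≤ pa)
    (hr : 0 < r) (hs : 0 ≤ s) (hss' : s ≤ s') :
    1 + pa * t * Real.log ((t + s ^ 2 / r ^ 2) / (1 + t)) +
      q * t * Real.log ((t + RL ^ 2 / r ^ 2) / (t + s ^ 2 / r ^ 2))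
    ≤ 1 + pa * t * Real.log ((t + s' ^ 2 / r ^ 2) / (1 + t)) +
      q * t * Real.log ((t + RL ^ 2 / r ^ 2) / (t + s' ^ 2 / r ^ 2)) := by
  have hr2 : (0:ℝ) < r ^ 2 := by positivity
  have hps : (0:ℝ) < t + s ^ 2 / r ^ 2 := by positivity
  have hps' : (0:ℝ) < t + s' ^ 2 / r ^ 2 := by positivity
  have hpR : (0:ℝ) < t + RL ^ 2 / r ^ 2 := by positivity
  have h1t : (0:ℝ) < 1 + t := by linarith
  rw [Real.log_div hps.ne' h1t.ne', Real.log_div hps'.ne' h1t.ne',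
      Real.log_div hpR.ne' hps.ne', Real.log_div hpR.ne' hps'.ne']
  have hls : Real.log (t + s ^ 2 / r ^ 2) ≤ Real.log (t + s' ^ 2 / r ^ 2) := by
    apply Real.log_le_log hps
    have h2 : s ^ 2 / r ^ 2 ≤ s' ^ 2 / r ^ 2 := (div_le_div_iff_of_pos_right hr2).mpr (by nlinarith)
    linarith
  nlinarith [mul_le_mul_of_nonneg_left hls (mul_nonneg (sub_nonneg.mpr hqpa) ht.le)]

lemma inside_mono {lamb t RL pa q r s s' : ℝ} (hlamb : 0 < lamb) (ht : 0 < t)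
    (hqpa : q ≤ pa) (hr : 0 ≤ r) (hs : 0 ≤ s) (hss' : s ≤ s') :
    insideF lamb t RL pa q s' r ≤ insideF lamb t RL pa q s r := by
  rcases hr.eq_or_lt with h | h
  · subst h; simp [insideF]
  · unfold insideF
    have hb := bracket_mono (RL := RL) ht hqpa h hs hss'
    have hc : (0:ℝ) ≤ π * lamb * r ^ 2 := by positivity
    have := mul_le_mul_of_nonneg_left hb hc
    have hexp := Real.exp_le_exp.mpr (neg_le_neg this)
    exact mul_le_mul_of_nonneg_left hexp (by positivity)

lemma inside_eq_outside {lamb t RL pa q r : ℝ} (ht : 0 < t) (hr : 0 < r) :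
    insideF lamb t RL pa q r r = outsideF lamb t RL q r := by
  have hr2 : r ^ 2 / r ^ 2 = 1 := div_self (by positivity)
  have h1t : (1:ℝ) + t ≠ 0 := by positivity
  rw [insideF, outsideF, hr2, show t + 1 = 1 + t from add_comm t 1, div_self h1t,
    Real.log_one, mul_zero, add_zero]

lemma inside_le_outside {lamb t RL pa q r s' : ℝ} (hlamb : 0 < lamb) (ht : 0 < t)
    (hqpa : q ≤ pa) (hr : 0 ≤ r) (hrs' : r ≤ s') :
    insideF lamb t RL pa q s' r ≤ outsideF lamb t RL q r := by
  rcases hr.eq_or_lt with h | h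
  · subst h; simp [insideF, outsideF]
  · calc insideF lamb t RL pa q s' r ≤ insideF lamb t RL pa q r r :=
          inside_mono hlamb ht hqpa hr hr hrs'  -- hr is now 0 < r? careful
      _ = outsideF lamb t RL q r := inside_eq_outside ht h

lemma inside_bound {lamb t RL pa q r s : ℝ} (hlamb : 0 < lamb) (ht : 0 < t)
    (hq : 0 ≤ q) (hqpa : q ≤ pa) (hr : 0 ≤ r) (hrs : r ≤ s) (hsRL : s ≤ RL) :
    |insideF lamb t RL pa q s r| ≤ 2 * π * lamb * RL := by
  have hRL : 0 ≤ RL := le_trans (le_trans hr hrs) hsRL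
  rcases hr.eq_or_lt with h | h
  · subst h; simp [insideF]; positivity
  · have hr2 : (0:ℝ) < r ^ 2 := by positivity
    have h1t : (0:ℝ) < 1 + t := by linarith
    have hps : (0:ℝ) < t + s ^ 2 / r ^ 2 := by positivity
    have hs2 : (1:ℝ) ≤ s ^ 2 / r ^ 2 := (one_le_div hr2).mpr (by nlinarith)
    have l1 : 0 ≤ Real.log ((t + s ^ 2 / r ^ 2) / (1 + t)) :=
      Real.log_nonneg ((one_le_div h1t).mpr (by linarith))
    have hs3 : s ^ 2 / r ^ 2 ≤ RL ^ 2 / r ^ 2 :=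
      (div_le_div_iff_of_pos_right hr2).mpr (by nlinarith)
    have l2 : 0 ≤ Real.log ((t + RL ^ 2 / r ^ 2) / (t + s ^ 2 / r ^ 2)) :=
      Real.log_nonneg ((one_le_div hps).mpr (by linarith))
    have hbr : (0:ℝ) ≤ 1 + pa * t * Real.log ((t + s ^ 2 / r ^ 2) / (1 + t)) +
        q * t * Real.log ((t + RL ^ 2 / r ^ 2) / (t + s ^ 2 / r ^ 2)) := by
      have hpa : 0 ≤ pa := le_trans hq hqpa
      nlinarith [mul_nonneg (mul_nonneg hpa ht.le) l1, mul_nonneg (mul_nonneg hq ht.le) l2]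
    have hexp : Real.exp (-(π * lamb * r ^ 2 *
        (1 + pa * t * Real.log ((t + s ^ 2 / r ^ 2) / (1 + t)) +
          q * t * Real.log ((t + RL ^ 2 / r ^ 2) / (t + s ^ 2 / r ^ 2))))) ≤ 1 := by
      rw [Real.exp_le_one_iff]
      have : (0:ℝ) ≤ π * lamb * r ^ 2 := by positivity
      nlinarith [mul_nonneg this hbr]
    have hnn : 0 ≤ insideF lamb t RL pa q s r := by unfold insideF; positivity
    rw [abs_of_nonneg hnn]
    calc insideF lamb t RL pa q s r ≤ 2 * π * lamb * r * 1 := by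
          unfold insideF; exact mul_le_mul_of_nonneg_left hexp (by positivity)
      _ ≤ 2 * π * lamb * RL := by
          rw [mul_one]
          exact mul_le_mul_of_nonneg_left (le_trans hrs hsRL) (by positivity)

lemma outside_bound {lamb t RL q r : ℝ} (hlamb : 0 < lamb) (ht : 0 < t)
    (hq : 0 ≤ q) (hr : 0 ≤ r) (hrRL : r ≤ RL) :
    |outsideF lamb t RL q r| ≤ 2 * π * lamb * RL := by
  have hRL : 0 ≤ RL := le_trans hr hrRL
  rcases hr.eq_or_lt with h | h
  · subst h; simp [outsideF]; positivity
  · have hr2 : (0:ℝ) < r ^ 2 := by positivity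
    have h1t : (0:ℝ) < 1 + t := by linarith
    have hs2 : (1:ℝ) ≤ RL ^ 2 / r ^ 2 := (one_le_div hr2).mpr (by nlinarith)
    have l1 : 0 ≤ Real.log ((t + RL ^ 2 / r ^ 2) / (1 + t)) :=
      Real.log_nonneg ((one_le_div h1t).mpr (by linarith))
    have hexp : Real.exp (-(π * lamb * r ^ 2 *
        (1 + q * t * Real.log ((t + RL ^ 2 / r ^ 2) / (1 + t))))) ≤ 1 := by
      rw [Real.exp_le_one_iff]
      have h0 : (0:ℝ) ≤ π * lamb * r ^ 2 := by positivity
      nlinarith [mul_nonneg h0 (by nlinarith [mul_nonneg (mul_nonneg hq ht.le) l1] :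
        (0:ℝ) ≤ 1 + q * t * Real.log ((t + RL ^ 2 / r ^ 2) / (1 + t)))]
    have hnn : 0 ≤ outsideF lamb t RL q r := by unfold outsideF; positivity
    rw [abs_of_nonneg hnn]
    calc outsideF lamb t RL q r ≤ 2 * π * lamb * r * 1 := by
          unfold outsideF; exact mul_le_mul_of_nonneg_left hexp (by positivity)
      _ ≤ 2 * π * lamb * RL := by
          rw [mul_one]; exact mul_le_mul_of_nonneg_left hrRL (by positivity)

lemma intervalIntegrable_of_bound {f : ℝ → ℝ} {a b C : ℝ} (hab : a ≤ b)
    (hm : Measurable f) (h : ∀ r ∈ Set.Icc a b, |f r| ≤ C) :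
    IntervalIntegrable f volume a b := by
  rw [intervalIntegrable_iff_integrableOn_Icc_of_le hab]
  refine Integrable.mono' (integrable_const C) hm.aestronglyMeasurable.restrict ?_
  exact (ae_restrict_iff' measurableSet_Icc).mpr (Filter.Eventually.of_forall
    (fun r hr => by simpa using h r hr))

/-- Remark 1 for `γ_c = 0` (α = 2 closed form of Proposition 1, eq. (4)): the SIR coverage
of a far-from-building user, as a function of the main-lobe interference radius
`s = R_β`, is nonincreasing on `[0, R_L]`; since `R_β` decreases in the bias `β`, coverage
increases with `β`. Here `p_a = θ/(2π) + (1 − θ/(2π))(g_s/g_m)`. -/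
theorem sir_coverage_far_user_antitone (lamb t RL gs gm θ : ℝ)
    (hlamb : 0 < lamb) (ht : 0 < t) (hRL : 0 < RL) (hgs : 0 < gs) (hgsgm : gs ≤ gm)
    (hθ : θ ∈ Set.Ioc 0 (2 * π)) :
    AntitoneOn (fun s : ℝ =>
      (∫ r in (0 : ℝ)..s, 2 * π * lamb * r *
        Real.exp (-(π * lamb * r ^ 2 *
          (1 + (θ / (2 * π) + (1 - θ / (2 * π)) * (gs / gm)) * t *
              Real.log ((t + s ^ 2 / r ^ 2) / (1 + t)) +
            (gs / gm) * t *
              Real.log ((t + RL ^ 2 / r ^ 2) / (t + s ^ 2 / r ^ 2)))))) +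
      ∫ r in s..RL, 2 * π * lamb * r *
        Real.exp (-(π * lamb * r ^ 2 *
          (1 + (gs / gm) * t * Real.log ((t + RL ^ 2 / r ^ 2) / (1 + t))))))
      (Set.Icc 0 RL) := by
  intro s1 hs1 s2 hs2 h12
  have hgm : 0 < gm := lt_of_lt_of_le hgs hgsgm
  set q : ℝ := gs / gm with hqdef
  set pa : ℝ := θ / (2 * π) + (1 - θ / (2 * π)) * (gs / gm) with hpadef
  have hq : 0 < q := div_pos hgs hgm
  have hq1 : q ≤ 1 := (div_le_one hgm).mpr hgsgm
  have hθp : 0 < θ / (2 * π) := div_pos hθ.1 (by positivity)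
  have hθ1 : θ / (2 * π) ≤ 1 := (div_le_one (by positivity)).mpr hθ.2
  have hqpa : q ≤ pa := by rw [hpadef, ← hqdef]; nlinarith
  have h0s1 : (0:ℝ) ≤ s1 := hs1.1
  have hs2RL : s2 ≤ RL := hs2.2
  show (∫ r in (0 : ℝ)..s2, insideF lamb t RL pa q s2 r) +
      (∫ r in s2..RL, outsideF lamb t RL q r) ≤
    (∫ r in (0 : ℝ)..s1, insideF lamb t RL pa q s1 r) +
      (∫ r in s1..RL, outsideF lamb t RL q r)
  have I1 : IntervalIntegrable (insideF lamb t RL pa q s2) volume 0 s1 :=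
    intervalIntegrable_of_bound h0s1 (measurable_insideF _ _ _ _ _ _)
      (fun r hr => inside_bound hlamb ht hq.le hqpa hr.1 (le_trans hr.2 h12) hs2RL)
  have I2 : IntervalIntegrable (insideF lamb t RL pa q s1) volume 0 s1 :=
    intervalIntegrable_of_bound h0s1 (measurable_insideF _ _ _ _ _ _)
      (fun r hr => inside_bound hlamb ht hq.le hqpa hr.1 hr.2 hs1.2)
  have I3 : IntervalIntegrable (insideF lamb t RL pa q s2) volume s1 s2 :=
    intervalIntegrable_of_bound h12 (measurable_insideF _ _ _ _ _ _)
      (fun r hr => inside_bound hlamb ht hq.le hqpa (le_trans h0s1 hr.1) hr.2 hs2RL)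
  have I4 : IntervalIntegrable (outsideF lamb t RL q) volume s1 s2 :=
    intervalIntegrable_of_bound h12 (measurable_outsideF _ _ _ _)
      (fun r hr => outside_bound hlamb ht hq.le (le_trans h0s1 hr.1) (le_trans hr.2 hs2RL))
  have I5 : IntervalIntegrable (outsideF lamb t RL q) volume s2 RL :=
    intervalIntegrable_of_bound hs2RL (measurable_outsideF _ _ _ _)
      (fun r hr => outside_bound hlamb ht hq.le (le_trans hs2.1 hr.1) hr.2)
  have split1 : (∫ r in (0 : ℝ)..s2, insideF lamb t RL pa q s2 r) =
      (∫ r in (0 : ℝ)..s1, insideF lamb t RL pa q s2 r) +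
        ∫ r in s1..s2, insideF lamb t RL pa q s2 r :=
    (intervalIntegral.integral_add_adjacent_intervals I1 I3).symm
  have split2 : (∫ r in s1..RL, outsideF lamb t RL q r) =
      (∫ r in s1..s2, outsideF lamb t RL q r) + ∫ r in s2..RL, outsideF lamb t RL q r :=
    (intervalIntegral.integral_add_adjacent_intervals I4 I5).symm
  have c1 : (∫ r in (0 : ℝ)..s1, insideF lamb t RL pa q s2 r) ≤
      ∫ r in (0 : ℝ)..s1, insideF lamb t RL pa q s1 r :=
    intervalIntegral.integral_mono_on h0s1 I1 I2
      (fun r hr => inside_mono hlamb ht hqpa hr.1 h0s1 h12)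
  have c2 : (∫ r in s1..s2, insideF lamb t RL pa q s2 r) ≤
      ∫ r in s1..s2, outsideF lamb t RL q r :=
    intervalIntegral.integral_mono_on h12 I3 I4
      (fun r hr => inside_le_outside hlamb ht hqpa (le_trans h0s1 hr.1) hr.2)
  rw [split1, split2]
  linarith
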